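/- Let R be a commutative ring and λ = (m₁,m₂,m₃) ∈ ℤ³ with m₁ ≥ m₂ ≥ m₃. For a polynomial p ∈ R[t] and i < j, let U_{ij}(p) = I₃ + p·E_{ij} (the elementary unipotent matrix). Then the multiplication map (p₁₂, p₂₃, p₁₃) ↦ U₁₂(p₁₂) · U₂₃(p₂₃) · U₁₃(p₁₃) is a bijection from P_{m₁−m₂} × P_{m₂−m₃} × P_{m₁−m₃} onto J^λ(R), where P_d ⊆ R[t] denotes the set of polynomials of degree < d (so P_0 = {0}), and J^λ(R) is the set of upper unitriangular 3×3 matrices (a_{ij}) over R[t] with deg a₁₂ ≤ m₁−m₂−1, deg a₂₃ ≤ m₂−m₃−1, deg a₁₃ ≤ m₁−m₃−1. In particular J^λ(R) is in bijection with R^{2(m₁−m₃)}. -/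

import Mathlib

noncomputable section

open Polynomial

/-- `P_d`: the set of polynomials of degree `< d` (so `P_0 = {0}`). -/
def Pset (R : Type*) [CommRing R] (d : ℕ) : Set (Polynomial R) :=
  {p | p.degree < (d : WithBot ℕ)}

/-- The elementary unipotent matrix `U_{ij}(p) = I₃ + p·E_{ij}`. -/
def elemU (R : Type*) [CommRing R] (i j : Fin 3) (p : Polynomial R) :
    Matrix (Fin 3) (Fin 3) (Polynomial R) :=
  1 + Matrix.single i j p

/-- `J^λ(R)`: upper unitriangular 3×3 matrices over `R[t]` with
`deg a₁₂ ≤ m₁−m₂−1`, `deg a₂₃ ≤ m₂−m₃−1`, `deg a₁₃ ≤ m₁−m₃−1`. -/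
def JLam (R : Type*) [CommRing R] (m : Fin 3 → ℤ) :
    Set (Matrix (Fin 3) (Fin 3) (Polynomial R)) :=
  {A | A 0 0 = 1 ∧ A 1 1 = 1 ∧ A 2 2 = 1 ∧
       A 1 0 = 0 ∧ A 2 0 = 0 ∧ A 2 1 = 0 ∧
       (A 0 1).degree < ((m 0 - m 1).toNat : WithBot ℕ) ∧
       (A 1 2).degree < ((m 1 - m 2).toNat : WithBot ℕ) ∧
       (A 0 2).degree < ((m 0 - m 2).toNat : WithBot ℕ)}

lemma elemU_prod (R : Type*) [CommRing R] (a b c : Polynomial R) :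
    elemU R 0 1 a * elemU R 1 2 b * elemU R 0 2 c
      = 1 + Matrix.single 0 1 a + Matrix.single 1 2 b
          + Matrix.single 0 2 (c + a * b) := by
  ext i j
  fin_cases i <;> fin_cases j <;>
    simp [elemU, Matrix.mul_apply, Matrix.single, Matrix.one_apply,
      Fin.sum_univ_three]

lemma deg_mul_lt {R : Type*} [CommRing R] {a b : Polynomial R} {n k : ℕ}
    (ha : a.degree < (n : WithBot ℕ)) (hb : b.degree < (k : WithBot ℕ)) :
    (a * b).degree < ((n + k : ℕ) : WithBot ℕ) := by
  rcases eq_or_ne a 0 with rfl | ha0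
  · rw [zero_mul, Polynomial.degree_zero]; exact WithBot.bot_lt_coe _
  rcases eq_or_ne b 0 with rfl | hb0
  · rw [mul_zero, Polynomial.degree_zero]; exact WithBot.bot_lt_coe _
  refine lt_of_le_of_lt (Polynomial.degree_mul_le a b) ?_
  rw [Polynomial.degree_eq_natDegree ha0, Polynomial.degree_eq_natDegree hb0] at *
  have hna : a.natDegree < n := by exact_mod_cast ha
  have hnb : b.natDegree < k := by exact_mod_cast hb
  rw [← Nat.cast_add]
  exact_mod_cast by omega

/-- For dominant `λ = (m₁, m₂, m₃)`, the multiplication map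
`(p₁₂, p₂₃, p₁₃) ↦ U₁₂(p₁₂)·U₂₃(p₂₃)·U₁₃(p₁₃)` is a bijection from
`P_{m₁−m₂} × P_{m₂−m₃} × P_{m₁−m₃}` onto `J^λ(R)`. -/
theorem statement7 (R : Type*) [CommRing R] (m : Fin 3 → ℤ)
    (h01 : m 1 ≤ m 0) (h12 : m 2 ≤ m 1) :
    Set.BijOn
      (fun u : Polynomial R × Polynomial R × Polynomial R =>
        elemU R 0 1 u.1 * elemU R 1 2 u.2.1 * elemU R 0 2 u.2.2)
      (Pset R (m 0 - m 1).toNat ×ˢ (Pset R (m 1 - m 2).toNat ×ˢ Pset R (m 0 - m 2).toNat))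
      (JLam R m) := by
  have hsum : (m 0 - m 1).toNat + (m 1 - m 2).toNat = (m 0 - m 2).toNat := by omega
  refine ⟨?_, ?_, ?_⟩
  · rintro ⟨a, b, c⟩ ⟨ha, hb, hc⟩
    simp only [elemU_prod]
    refine ⟨?_, ?_, ?_, ?_, ?_, ?_, ?_, ?_, ?_⟩ <;>
      simp only [Matrix.add_apply, Matrix.one_apply, Matrix.single,
        Matrix.of_apply] <;>
      norm_num [Fin.ext_iff]
    · exact ha
    · exact hb
    · refine lt_of_le_of_lt (Polynomial.degree_add_le _ _) (max_lt hc ?_)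
      have := deg_mul_lt ha hb
      rwa [hsum] at this
  · rintro ⟨a, b, c⟩ - ⟨a', b', c'⟩ - h
    simp only [elemU_prod] at h
    have h01' := congrFun (congrFun h 0) 1
    have h12' := congrFun (congrFun h 1) 2
    have h02' := congrFun (congrFun h 0) 2
    simp only [Matrix.add_apply, Matrix.one_apply, Matrix.single,
      Matrix.of_apply] at h01' h12' h02'
    norm_num [Fin.ext_iff] at h01' h12' h02'
    subst h01'; subst h12'
    have hcc : c = c' := by linear_combination h02'
    simp [hcc]
  · rintro A ⟨h00, h11, h22, h10, h20, h21, d01, d12, d02⟩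
    refine ⟨(A 0 1, A 1 2, A 0 2 - A 0 1 * A 1 2), ⟨d01, d12, ?_⟩, ?_⟩
    · refine lt_of_le_of_lt (Polynomial.degree_sub_le _ _) (max_lt d02 ?_)
      have := deg_mul_lt d01 d12
      rwa [hsum] at this
    · simp only [elemU_prod]
      ext i j
      fin_cases i <;> fin_cases j <;>
        simp only [Matrix.add_apply, Matrix.one_apply, Matrix.single,
          Matrix.of_apply] <;>
        norm_num [Fin.ext_iff] <;>
        simp_all
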